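/- A uniform limit of continuous periodic functions ℝ → ℂ is almost periodic in the sense of Bohr: for every ε > 0, the set of ε-almost-periods {τ : sup_t |f(t+τ) − f(t)| ≤ ε} is relatively dense in ℝ. -/
import Mathlib


open Filter

/-- A uniform limit of continuous periodic functions `ℝ → ℂ` is Bohr almost periodic:
for every `ε > 0` the set of `ε`-almost-periods is relatively dense in `ℝ`. -/
theorem limit_periodic_is_almost_periodic
    (f : ℝ → ℂ) (F : ℕ → ℝ → ℂ) (p : ℕ → ℝ)
    (hcont : ∀ n, Continuous (F n)) (hp : ∀ n, 0 < p n)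
    (hper : ∀ n, Function.Periodic (F n) (p n))
    (hunif : TendstoUniformly F f atTop) :
    ∀ ε > (0:ℝ), ∃ L > (0:ℝ), ∀ a : ℝ, ∃ τ ∈ Set.Icc a (a + L),
      ∀ t : ℝ, ‖f (t + τ) - f t‖ ≤ ε := by
  intro ε hε
  have hε3 : (0:ℝ) < ε / 3 := by linarith
  obtain ⟨n, hn⟩ := ((Metric.tendstoUniformly_iff.mp hunif) (ε/3) hε3).exists
  refine ⟨p n, hp n, fun a => ?_⟩
  set k : ℤ := ⌈a / p n⌉ with hk
  refine ⟨k * p n, ⟨?_, ?_⟩, ?_⟩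
  · have h1 : a / p n ≤ (k : ℝ) := Int.le_ceil _
    exact (div_le_iff₀ (hp n)).mp h1
  · have h2 : (k : ℝ) < a / p n + 1 := Int.ceil_lt_add_one _
    have := div_mul_cancel₀ a (hp n).ne'
    nlinarith [hp n]
  · intro t
    have hFper : F n (t + k * p n) = F n t := (hper n).int_mul k t
    have h1 := hn (t + k * p n)
    have h2 := hn t
    rw [dist_eq_norm] at h1 h2
    have : f (t + k * p n) - f t =
        (f (t + ↑k * p n) - F n (t + ↑k * p n)) + (F n t - f t) := by
      rw [hFper]; ring
    rw [this]
    calc ‖_ + _‖ ≤ ‖f (t + ↑k * p n) - F n (t + ↑k * p n)‖ + ‖F n t - f t‖ :=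
          norm_add_le _ _
    _ ≤ ε/3 + ε/3 := add_le_add h1.le (by rw [norm_sub_rev]; exact h2.le)
    _ ≤ ε := by linarith
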